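/- Let G be an n×n complex matrix all of whose eigenvalues have strictly negative real part. Then there exist an invertible n×n complex matrix U and an n×n complex matrix Λ such that G = U·Λ·U⁻¹ and Λ + Λ* is a Hermitian negative definite matrix, where Λ* denotes the conjugate transpose of Λ. -/

import Mathlib

open Matrix Polynomial
open scoped ComplexOrder

section Helpers

variable {m : Type*} [Fintype m] [DecidableEq m]

lemma my_eval_charpoly (M : Matrix m m ℂ) (t : ℂ) :
    M.charpoly.eval t = (t • (1 : Matrix m m ℂ) - M).det := by
  rw [Matrix.charpoly, ← Polynomial.coe_evalRingHom, RingHom.map_det]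
  congr 1
  ext i j
  by_cases h : i = j <;>
    simp [h, Matrix.charmatrix_apply, Matrix.one_apply, Matrix.diagonal_apply]

omit [DecidableEq m] in
lemma my_star_dot (L : Matrix m m ℂ) (x : m → ℂ) :
    star x ⬝ᵥ Lᴴ *ᵥ x = star (star x ⬝ᵥ L *ᵥ x) := by
  rw [star_dotProduct, star_mulVec, Matrix.conjTranspose_conjTranspose, ← dotProduct_mulVec]

omit [DecidableEq m] in
lemma my_quad (L : Matrix m m ℂ) (x : m → ℂ) :
    star x ⬝ᵥ (-(L + Lᴴ)) *ᵥ x = ((-(2 * (star x ⬝ᵥ L *ᵥ x).re) : ℝ) : ℂ) := by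
  have h := my_star_dot L x
  rw [Matrix.neg_mulVec, Matrix.add_mulVec, dotProduct_neg, dotProduct_add, h]
  have h2 := Complex.add_conj (star x ⬝ᵥ L *ᵥ x)
  rw [show (star (star x ⬝ᵥ L *ᵥ x) : ℂ) = (starRingEnd ℂ) (star x ⬝ᵥ L *ᵥ x) from rfl, h2]
  push_cast
  ring

omit [Fintype m] [DecidableEq m] in
lemma my_herm (L : Matrix m m ℂ) : (-(L + Lᴴ)).IsHermitian := by
  unfold Matrix.IsHermitian
  simp [Matrix.conjTranspose_add, add_comm]

omit [DecidableEq m] in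
lemma my_posdef_crit (L : Matrix m m ℂ)
    (h : ∀ x : m → ℂ, x ≠ 0 → (star x ⬝ᵥ L *ᵥ x).re < 0) : (-(L + Lᴴ)).PosDef := by
  refine Matrix.PosDef.of_dotProduct_mulVec_pos (my_herm L) fun x hx => ?_
  rw [my_quad, Complex.zero_lt_real]
  have := h x hx
  linarith

lemma my_sum_normSq_pos {n : ℕ} {y : Fin n → ℂ} (hy : y ≠ 0) :
    0 < ∑ i, Complex.normSq (y i) := by
  obtain ⟨i, hi⟩ := Function.ne_iff.mp hy
  exact Finset.sum_pos' (fun j _ => Complex.normSq_nonneg _)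
    ⟨i, Finset.mem_univ i, Complex.normSq_pos.mpr hi⟩

lemma my_coercive {n : ℕ} {A : Matrix (Fin n) (Fin n) ℂ} (hA : A.PosDef) :
    ∃ c : ℝ, 0 < c ∧ ∀ y : Fin n → ℂ, c * ∑ i, Complex.normSq (y i) ≤ (star y ⬝ᵥ A *ᵥ y).re := by
  rcases Nat.eq_zero_or_pos n with hn | hn
  · refine ⟨1, one_pos, fun y => ?_⟩
    subst hn
    simp [dotProduct]
  have hcont : Continuous fun y : Fin n → ℂ => (star y ⬝ᵥ A *ᵥ y).re := by
    simp only [dotProduct, Matrix.mulVec, Pi.star_apply]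
    fun_prop
  have hcontN : Continuous fun y : Fin n → ℂ => ∑ i, Complex.normSq (y i) := by
    refine continuous_finset_sum _ fun i _ => Complex.continuous_normSq.comp (continuous_apply i)
  set S : Set (Fin n → ℂ) := {y | ∑ i, Complex.normSq (y i) = 1} with hS
  have hSclosed : IsClosed S := isClosed_eq hcontN continuous_const
  have hSsub : S ⊆ Metric.closedBall 0 1 := by
    intro y hy
    simp only [Metric.mem_closedBall, dist_zero_right]
    refine (pi_norm_le_iff_of_nonneg zero_le_one).mpr fun i => ?_
    have h1 : Complex.normSq (y i) ≤ 1 := by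
      rw [← hy]
      exact Finset.single_le_sum (fun j _ => Complex.normSq_nonneg _) (Finset.mem_univ i)
    have := Complex.normSq_eq_norm_sq (y i)
    nlinarith [norm_nonneg (y i)]
  have hScompact : IsCompact S :=
    (isCompact_closedBall (0 : Fin n → ℂ) 1).of_isClosed_subset hSclosed hSsub
  have hSne : S.Nonempty := by
    refine ⟨Pi.single ⟨0, hn⟩ 1, ?_⟩
    simp only [hS, Set.mem_setOf_eq, Pi.single_apply]
    rw [Finset.sum_eq_single ⟨0, hn⟩] <;> simp
  obtain ⟨z₀, hz₀S, hz₀min⟩ := hScompact.exists_isMinOn hSne hcont.continuousOn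
  set c := (star z₀ ⬝ᵥ A *ᵥ z₀).re with hc
  have hz₀ne : z₀ ≠ 0 := by
    intro h
    rw [h] at hz₀S
    simp [hS] at hz₀S
  have hcpos : 0 < c := by
    have := hA.dotProduct_mulVec_pos hz₀ne
    rw [Complex.lt_def] at this
    simpa using this.1
  refine ⟨c, hcpos, fun y => ?_⟩
  by_cases hy : y = 0
  · simp [hy]
  · set N := ∑ i, Complex.normSq (y i) with hN
    have hNpos : 0 < N := my_sum_normSq_pos hy
    set r := Real.sqrt N with hr
    have hrpos : 0 < r := Real.sqrt_pos.mpr hNpos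
    have hr2 : r ^ 2 = N := Real.sq_sqrt hNpos.le
    set t : ℂ := (r : ℂ) with ht
    have htne : t ≠ 0 := by simp [ht]; exact hrpos.ne'
    set z : Fin n → ℂ := t⁻¹ • y with hz
    have hzS : z ∈ S := by
      simp only [hS, Set.mem_setOf_eq, hz, Pi.smul_apply, smul_eq_mul, Complex.normSq_mul]
      rw [← Finset.mul_sum, ← hN]
      have : Complex.normSq t⁻¹ = (r ^ 2)⁻¹ := by
        rw [Complex.normSq_inv, ht, Complex.normSq_ofReal]; ring_nf
      rw [this, hr2, inv_mul_cancel₀ hNpos.ne']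
    have hyz : y = t • z := by
      rw [hz, smul_smul, mul_inv_cancel₀ htne, one_smul]
    have hkey : (star y ⬝ᵥ A *ᵥ y) = (Complex.normSq t : ℂ) * (star z ⬝ᵥ A *ᵥ z) := by
      rw [hyz]
      rw [Matrix.mulVec_smul, star_smul, smul_dotProduct, dotProduct_smul]
      rw [smul_eq_mul, smul_eq_mul, ← mul_assoc]
      congr 1
      rw [show (star t : ℂ) = (starRingEnd ℂ) t from rfl, mul_comm, Complex.mul_conj]
    have hfz : c ≤ (star z ⬝ᵥ A *ᵥ z).re := hz₀min hzS
    have hnt : Complex.normSq t = N := by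
      rw [ht, Complex.normSq_ofReal, ← sq, hr2]
    rw [hkey, Complex.re_ofReal_mul, hnt]
    nlinarith

lemma my_block {n : ℕ} {lam : ℂ} (hlam : lam.re < 0) (w : Matrix Unit (Fin n) ℂ)
    {L' : Matrix (Fin n) (Fin n) ℂ} (hL' : (-(L' + L'ᴴ)).PosDef) :
    ∃ ε : ℝ, 0 < ε ∧
      (-(fromBlocks (Matrix.of fun _ _ => lam) ((ε : ℂ) • w) 0 L' +
        (fromBlocks (Matrix.of fun _ _ => lam) ((ε : ℂ) • w) 0 L')ᴴ)).PosDef := by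
  obtain ⟨c, hcpos, hcoer⟩ := my_coercive hL'
  set W : ℝ := ∑ j, ‖w () j‖ with hW
  have hWnn : 0 ≤ W := Finset.sum_nonneg fun j _ => norm_nonneg _
  set δ : ℝ := min (-lam.re) (c / 2) with hδ
  have hδpos : 0 < δ := lt_min (by linarith) (by linarith)
  set ε : ℝ := δ / (2 * (W + 1)) with hε
  have hεpos : 0 < ε := div_pos hδpos (by linarith)
  have hεW : ε * W ≤ δ / 2 := by
    rw [hε, div_mul_eq_mul_div, div_le_div_iff₀ (by linarith) (by norm_num)]
    nlinarith
  refine ⟨ε, hεpos, my_posdef_crit _ fun x hx => ?_⟩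
  set x₀ : ℂ := x (Sum.inl ()) with hx₀
  set y : Fin n → ℂ := x ∘ Sum.inr with hy
  set a : ℝ := Complex.normSq x₀ with ha
  set N : ℝ := ∑ j, Complex.normSq (y j) with hN
  set T : ℂ := ∑ j, w () j * y j with hT
  set R : ℂ := star y ⬝ᵥ L' *ᵥ y with hR
  have hS : star x ⬝ᵥ (fromBlocks (Matrix.of fun _ _ => lam) ((ε : ℂ) • w) 0 L') *ᵥ x
      = lam * (a : ℂ) + (ε : ℂ) * ((starRingEnd ℂ) x₀ * T) + R := by
    rw [Matrix.fromBlocks_mulVec]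
    have hstar : star x = Sum.elim (star (x ∘ Sum.inl)) (star (x ∘ Sum.inr)) := by
      ext (u | j) <;> rfl
    rw [hstar, sumElim_dotProduct_sumElim]
    simp only [Matrix.zero_mulVec, zero_add, dotProduct_add]
    have h1 : star (x ∘ Sum.inl) ⬝ᵥ (Matrix.of fun _ _ => lam) *ᵥ (x ∘ Sum.inl)
        = lam * (a : ℂ) := by
      simp only [dotProduct, Matrix.mulVec, Fintype.univ_punit, Finset.sum_singleton,
        Pi.star_apply, Function.comp_apply, Matrix.of_apply, dotProduct]
      rw [show x (Sum.inl ()) = x₀ from rfl, ha, Complex.normSq_eq_conj_mul_self,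
        show (star x₀ : ℂ) = (starRingEnd ℂ) x₀ from rfl]
      ring
    have h2 : star (x ∘ Sum.inl) ⬝ᵥ ((ε : ℂ) • w) *ᵥ (x ∘ Sum.inr)
        = (ε : ℂ) * ((starRingEnd ℂ) x₀ * T) := by
      simp only [dotProduct, Matrix.mulVec, Fintype.univ_punit, Finset.sum_singleton,
        Pi.star_apply, Function.comp_apply, Matrix.smul_apply, smul_eq_mul, dotProduct,
        hT, Finset.mul_sum]
      rw [show x (Sum.inl ()) = x₀ from rfl, show (star x₀ : ℂ) = (starRingEnd ℂ) x₀ from rfl]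
      congr 1
      ext j
      rw [show x (Sum.inr j) = y j from rfl]
      ring
    rw [h1, h2]
  rw [hS]
  -- real part computation
  have hre : (lam * (a : ℂ) + (ε : ℂ) * ((starRingEnd ℂ) x₀ * T) + R).re
      = lam.re * a + ε * ((starRingEnd ℂ) x₀ * T).re + R.re := by
    simp [Complex.add_re, Complex.mul_re, Complex.ofReal_re, Complex.ofReal_im]
  rw [hre]
  -- bounds
  have hann : 0 ≤ a := Complex.normSq_nonneg _
  have hNnn : 0 ≤ N := Finset.sum_nonneg fun j _ => Complex.normSq_nonneg _
  have hRre : R.re ≤ -(c / 2) * N := by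
    have h := hcoer y
    rw [my_quad L' y, ← hR, ← hN] at h
    rw [Complex.ofReal_re] at h
    linarith
  have hcross : ((starRingEnd ℂ) x₀ * T).re ≤ W * (a + N) / 2 := by
    calc ((starRingEnd ℂ) x₀ * T).re ≤ ‖(starRingEnd ℂ) x₀ * T‖ := Complex.re_le_norm _
      _ = ‖x₀‖ * ‖T‖ := by rw [norm_mul, Complex.norm_conj]
      _ ≤ ‖x₀‖ * ∑ j, ‖w () j * y j‖ := by
          exact mul_le_mul_of_nonneg_left (norm_sum_le _ _) (norm_nonneg _)
      _ = ∑ j, ‖w () j‖ * (‖x₀‖ * ‖y j‖) := by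
          rw [Finset.mul_sum]; congr 1; ext j; rw [norm_mul]; ring
      _ ≤ ∑ j, ‖w () j‖ * ((a + N) / 2) := by
          refine Finset.sum_le_sum fun j _ => mul_le_mul_of_nonneg_left ?_ (norm_nonneg _)
          have h1 : Complex.normSq (y j) ≤ N :=
            Finset.single_le_sum (f := fun i => Complex.normSq (y i))
              (fun i _ => Complex.normSq_nonneg _) (Finset.mem_univ j)
          nlinarith [sq_nonneg (‖x₀‖ - ‖y j‖), Complex.sq_norm x₀,
            Complex.sq_norm (y j)]
      _ = W * (a + N) / 2 := by rw [← Finset.sum_mul, ← hW]; ring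
  -- nonzero
  have haN : 0 < a + N := by
    obtain ⟨k, hk⟩ := Function.ne_iff.mp hx
    rcases k with u | j
    · cases u
      have : 0 < a := Complex.normSq_pos.mpr hk
      linarith
    · have h1 : 0 < Complex.normSq (y j) := Complex.normSq_pos.mpr hk
      have h2 : Complex.normSq (y j) ≤ N :=
        Finset.single_le_sum (f := fun i => Complex.normSq (y i))
          (fun i _ => Complex.normSq_nonneg _) (Finset.mem_univ j)
      linarith
  have hδ1 : δ ≤ -lam.re := min_le_left _ _
  have hδ2 : δ ≤ c / 2 := min_le_right _ _
  have hc2 : ε * ((starRingEnd ℂ) x₀ * T).re ≤ ε * (W * (a + N) / 2) :=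
    mul_le_mul_of_nonneg_left hcross hεpos.le
  have hc3 : ε * (W * (a + N) / 2) ≤ (δ / 2) * ((a + N) / 2) := by
    have := mul_le_mul_of_nonneg_right hεW (by linarith : (0:ℝ) ≤ (a + N) / 2)
    nlinarith
  nlinarith

lemma my_posdef_reindex {m l : Type*} [Fintype m] [Fintype l] [DecidableEq m] [DecidableEq l]
    (e : m ≃ l) {M : Matrix m m ℂ} (hM : M.PosDef) : (reindex e e M).PosDef := by
  refine Matrix.PosDef.of_dotProduct_mulVec_pos ?_ ?_
  · have h := hM.1
    rw [Matrix.IsHermitian] at h ⊢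
    rw [Matrix.conjTranspose_reindex, h]
  · intro x hx
    have hxe : x ∘ e ≠ 0 := by
      obtain ⟨j, hj⟩ := Function.ne_iff.mp hx
      exact Function.ne_iff.mpr ⟨e.symm j, by simpa using hj⟩
    have hmv : (reindex e e M) *ᵥ x = (M *ᵥ (x ∘ e)) ∘ e.symm := by
      rw [Matrix.reindex_apply, Matrix.submatrix_mulVec_equiv]
      simp
    have hdp : star x ⬝ᵥ ((M *ᵥ (x ∘ e)) ∘ e.symm) = star (x ∘ e) ⬝ᵥ (M *ᵥ (x ∘ e)) := by
      simp only [dotProduct, Pi.star_apply, Function.comp_apply]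
      exact Fintype.sum_equiv e.symm _ _ fun j => by simp
    rw [hmv, hdp]
    exact hM.dotProduct_mulVec_pos hxe

lemma my_aux : ∀ (n : ℕ) (G : Matrix (Fin n) (Fin n) ℂ),
    (∀ lam : ℂ, G.charpoly.IsRoot lam → lam.re < 0) →
    ∃ U L : Matrix (Fin n) (Fin n) ℂ,
      IsUnit U.det ∧ G = U * L * U⁻¹ ∧ (-(L + Lᴴ)).PosDef := by
  intro n
  induction n with
  | zero =>
    intro G _
    refine ⟨1, G, by simp, by simp, my_posdef_crit _ fun x hx => ?_⟩
    exact absurd (Subsingleton.elim x 0) hx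
  | succ n IH =>
    intro G hG
    -- an eigenvalue exists
    have hdeg : 0 < G.charpoly.degree := by
      rw [Matrix.charpoly_degree_eq_dim]
      simp only [Fintype.card_fin]
      exact_mod_cast Nat.succ_pos n
    obtain ⟨lam, hlamroot⟩ := Complex.exists_root hdeg
    have hlamre : lam.re < 0 := hG lam hlamroot
    -- an eigenvector
    have hdet0 : (G - lam • 1).det = 0 := by
      have h1 : (lam • (1 : Matrix (Fin (n+1)) (Fin (n+1)) ℂ) - G).det = 0 := by
        rw [← my_eval_charpoly]; exact hlamroot
      have h2 : G - lam • 1 = -(lam • (1 : Matrix (Fin (n+1)) (Fin (n+1)) ℂ) - G) := by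
        rw [neg_sub]
      rw [h2, Matrix.det_neg, h1, mul_zero]
    obtain ⟨v, hv0, hvec⟩ := Matrix.exists_mulVec_eq_zero_iff.mpr hdet0
    have hGv : G *ᵥ v = lam • v := by
      rw [Matrix.sub_mulVec] at hvec
      have h1 : (lam • (1 : Matrix (Fin (n+1)) (Fin (n+1)) ℂ)) *ᵥ v = lam • v := by
        rw [Matrix.smul_mulVec, Matrix.one_mulVec]
      rw [h1] at hvec
      exact sub_eq_zero.mp hvec
    obtain ⟨i, hvi'⟩ := Function.ne_iff.mp hv0
    have hvi : v i ≠ 0 := by simpa using hvi'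
    -- the similarity P
    set P : Matrix (Fin (n+1)) (Fin (n+1)) ℂ := (1 : Matrix _ _ ℂ).updateCol i v with hP
    have hdetP : P.det = v i := by
      rw [hP, ← Matrix.cramer_apply, Matrix.cramer_one]; rfl
    have hPunit : IsUnit P.det := by rw [hdetP]; exact isUnit_iff_ne_zero.mpr hvi
    set M₁ : Matrix (Fin (n+1)) (Fin (n+1)) ℂ := P⁻¹ * G * P with hM₁
    have hGM₁ : G = P * M₁ * P⁻¹ := by
      rw [hM₁]
      rw [show P * (P⁻¹ * G * P) * P⁻¹ = (P * P⁻¹) * G * (P * P⁻¹) by noncomm_ring,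
        Matrix.mul_nonsing_inv P hPunit]
      simp
    -- column i of M₁ is lam * e_i
    have hcol : ∀ j, M₁ j i = if j = i then lam else 0 := by
      have h1 : P *ᵥ (Pi.single i (1:ℂ) : Fin (n+1) → ℂ) = v := by
        rw [Matrix.mulVec_single]
        ext j
        simp [hP, Matrix.updateCol_apply]
      have h2 : M₁ *ᵥ (Pi.single i (1:ℂ) : Fin (n+1) → ℂ) = lam • (Pi.single i (1:ℂ) : Fin (n+1) → ℂ) := by
        rw [hM₁, ← Matrix.mulVec_mulVec, ← Matrix.mulVec_mulVec, h1, hGv,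
          Matrix.mulVec_smul]
        have h4 : P⁻¹ *ᵥ v = (Pi.single i (1:ℂ) : Fin (n+1) → ℂ) := by
          rw [← h1, Matrix.mulVec_mulVec, Matrix.nonsing_inv_mul P hPunit, Matrix.one_mulVec]
        rw [h4]
      intro j
      have h3 := congrFun h2 j
      simp only [Matrix.mulVec_single_one, Matrix.col_apply, mul_one, Pi.smul_apply, Pi.single_apply,
        smul_eq_mul] at h3
      rw [h3]
      split <;> simp
    -- the block equiv
    set e : Unit ⊕ Fin n ≃ Fin (n+1) :=
      (Equiv.sumComm Unit (Fin n)).trans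
        ((Equiv.optionEquivSumPUnit (Fin n)).symm.trans (finSuccEquiv' i).symm) with he
    have he1 : ∀ u, e (Sum.inl u) = i := by intro u; simp [he]
    have he2 : ∀ j, e (Sum.inr j) = i.succAbove j := by intro j; simp [he]
    set w : Matrix Unit (Fin n) ℂ := Matrix.of fun _ j => M₁ i (i.succAbove j) with hw
    set M' : Matrix (Fin n) (Fin n) ℂ :=
      Matrix.of fun j k => M₁ (i.succAbove j) (i.succAbove k) with hM'
    set Mb : Matrix (Unit ⊕ Fin n) (Unit ⊕ Fin n) ℂ := reindex e.symm e.symm M₁ with hMbdef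
    have hMb : Mb = fromBlocks (Matrix.of fun _ _ => lam) w 0 M' := by
      ext (u | j) (u' | k)
      · simp [hMbdef, he1, hcol]
      · simp [hMbdef, he1, he2, hw]
      · simp [hMbdef, he1, he2, hcol, Fin.succAbove_ne]
      · simp [hMbdef, he2, hM']
    have hM₁b : M₁ = reindex e e Mb := by simp [hMbdef]
    -- charpoly transfer
    have htrans : ∀ μ : ℂ, M'.charpoly.IsRoot μ → G.charpoly.IsRoot μ := by
      intro μ hμ
      have h1 : M₁.charpoly = (Matrix.of fun _ _ => lam : Matrix Unit Unit ℂ).charpoly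
          * M'.charpoly := by
        rw [hM₁b, Matrix.charpoly_reindex, hMb, Matrix.charpoly_fromBlocks_zero₂₁]
      have h3 : M₁.charpoly.IsRoot μ := by
        rw [Polynomial.IsRoot, h1, Polynomial.eval_mul, hμ.eq_zero, mul_zero]
      rw [Polynomial.IsRoot, my_eval_charpoly] at h3 ⊢
      have h4 : μ • (1 : Matrix (Fin (n+1)) (Fin (n+1)) ℂ) - M₁
          = P⁻¹ * (μ • (1 : Matrix (Fin (n+1)) (Fin (n+1)) ℂ) - G) * P := by
        rw [hM₁, Matrix.mul_sub, Matrix.sub_mul]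
        congr 1
        rw [Matrix.mul_smul, mul_one, Matrix.smul_mul, Matrix.nonsing_inv_mul P hPunit]
      rw [h4, Matrix.det_mul, Matrix.det_mul] at h3
      have h5 : P⁻¹.det ≠ 0 := by
        rw [Matrix.det_nonsing_inv]
        simpa [Ring.inverse_eq_inv'] using inv_ne_zero (hPunit.ne_zero)
      have h6 : P.det ≠ 0 := hPunit.ne_zero
      rcases mul_eq_zero.mp h3 with h | h
      · rcases mul_eq_zero.mp h with h' | h'
        · exact absurd h' h5
        · exact h'
      · exact absurd h h6
    obtain ⟨U', L', hU'det, hM'eq, hL'pos⟩ := IH M' fun μ hμ => hG μ (htrans μ hμ)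
    -- epsilon
    obtain ⟨ε, hεpos, hLbpos⟩ := my_block hlamre (w * U') hL'pos
    have hεne : (ε : ℂ) ≠ 0 := by exact_mod_cast hεpos.ne'
    set Lb : Matrix (Unit ⊕ Fin n) (Unit ⊕ Fin n) ℂ :=
      fromBlocks (Matrix.of fun _ _ => lam) ((ε : ℂ) • (w * U')) 0 L' with hLb
    set Q : Matrix (Unit ⊕ Fin n) (Unit ⊕ Fin n) ℂ :=
      fromBlocks 1 0 0 ((ε : ℂ) • U') with hQ
    have hQdet : IsUnit Q.det := by
      rw [hQ, Matrix.det_fromBlocks_zero₂₁, Matrix.det_one, one_mul, Matrix.det_smul]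
      exact (IsUnit.pow _ (isUnit_iff_ne_zero.mpr hεne)).mul hU'det
    have hQinv : Q⁻¹ = fromBlocks 1 0 0 ((ε : ℂ)⁻¹ • U'⁻¹) := by
      apply Matrix.inv_eq_right_inv
      rw [hQ, Matrix.fromBlocks_multiply]
      simp only [Matrix.mul_one, Matrix.one_mul, Matrix.mul_zero, Matrix.zero_mul,
        add_zero, zero_add]
      rw [Matrix.smul_mul, Matrix.mul_smul, smul_smul, mul_inv_cancel₀ hεne,
        Matrix.mul_nonsing_inv _ hU'det, one_smul, Matrix.fromBlocks_one]
    have hMbQ : Mb = Q * Lb * Q⁻¹ := by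
      rw [hMb, hQinv, hQ, hLb, Matrix.fromBlocks_multiply, Matrix.fromBlocks_multiply]
      have hTR : w * U' * U'⁻¹ = w := by
        rw [Matrix.mul_assoc, Matrix.mul_nonsing_inv _ hU'det, Matrix.mul_one]
      simp only [Matrix.mul_one, Matrix.one_mul, Matrix.mul_zero, Matrix.zero_mul,
        add_zero, zero_add, smul_zero, zero_smul, Matrix.smul_mul, Matrix.mul_smul, smul_smul,
        mul_inv_cancel₀ hεne, inv_mul_cancel₀ hεne, one_smul]
      rw [hTR, ← hM'eq]
    -- push through reindex
    set Qf : Matrix (Fin (n+1)) (Fin (n+1)) ℂ := reindex e e Q with hQf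
    set L : Matrix (Fin (n+1)) (Fin (n+1)) ℂ := reindex e e Lb with hL
    have hreix : ∀ A B : Matrix (Unit ⊕ Fin n) (Unit ⊕ Fin n) ℂ,
        reindex e e (A * B) = reindex (α := ℂ) e e A * reindex e e B := by
      intro A B
      have := map_mul (Matrix.reindexAlgEquiv ℂ ℂ e) A B
      simpa [Matrix.reindexAlgEquiv_apply] using this
    have hQfdet : IsUnit Qf.det := by rw [hQf, Matrix.det_reindex_self]; exact hQdet
    have hQfinv : Qf⁻¹ = reindex e e Q⁻¹ := by
      apply Matrix.inv_eq_right_inv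
      rw [hQf, ← hreix, Matrix.mul_nonsing_inv _ hQdet]
      simp
    have hM₁f : M₁ = Qf * L * Qf⁻¹ := by
      rw [hM₁b, hMbQ, hreix, hreix, hQfinv, hQf, hL]
    -- assemble
    refine ⟨P * Qf, L, ?_, ?_, ?_⟩
    · rw [Matrix.det_mul]; exact hPunit.mul hQfdet
    · rw [hGM₁, hM₁f, Matrix.mul_inv_rev]
      noncomm_ring
    · have hLrw : -(L + Lᴴ) = reindex e e (-(Lb + Lbᴴ)) := by
        rw [hL, Matrix.conjTranspose_reindex]
        ext j k
        simp
      rw [hLrw]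
      exact my_posdef_reindex e hLbpos

end Helpers

/-- If all eigenvalues of `G` have negative real part, there exist an invertible
`U` and a matrix `Λ` with `G = U Λ U⁻¹` and `Λ + Λᴴ` Hermitian negative definite. -/
theorem exists_similarity_with_negdef_hermitian_part
    (n : ℕ) (G : Matrix (Fin n) (Fin n) ℂ)
    (heig : ∀ lam : ℂ, G.charpoly.IsRoot lam → lam.re < 0) :
    ∃ (U L : Matrix (Fin n) (Fin n) ℂ),
      IsUnit U.det ∧ G = U * L * U⁻¹ ∧ (-(L + Lᴴ)).PosDef :=
  my_aux n G heig
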